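/- For every integer i ≥ 0, every bipartite graph G with n vertices and at least 4^i·k + n·(2^i − 1) edges is in (2^i, k)-LCP. -/

import Mathlib

open Finset

open scoped Classical in
/-- `G ∈ (c,k)`-LCP: there is a `c`-coloring such that each color has at least `k`
monochromatic edges. -/
def LCP {V : Type*} [Fintype V] (G : SimpleGraph V) (c k : ℕ) : Prop :=
  ∃ φ : V → Fin c, ∀ i : Fin c,
    k ≤ (G.edgeFinset.filter (fun e => ∀ v ∈ e, φ v = i)).card

namespace LCPwork
open scoped Classical
variable {V : Type*} [Fintype V] (G : SimpleGraph V)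



noncomputable def inE (U : Finset V) : Finset (Sym2 V) :=
  G.edgeFinset.filter (fun e => ∀ v ∈ e, v ∈ U)

lemma mem_inE {U : Finset V} {e : Sym2 V} :
    e ∈ inE G U ↔ e ∈ G.edgeFinset ∧ ∀ v ∈ e, v ∈ U := mem_filter

lemma inE_mono {U U' : Finset V} (h : U ⊆ U') : inE G U ⊆ inE G U' := by
  intro e he
  rw [mem_inE] at he ⊢
  exact ⟨he.1, fun v hv => h (he.2 v hv)⟩

lemma card_inE_union (P Q : Finset V) (hdisj : Disjoint P Q)
    (hPind : ∀ x ∈ P, ∀ y ∈ P, ¬ G.Adj x y) (hQind : ∀ x ∈ Q, ∀ y ∈ Q, ¬ G.Adj x y) :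
    (inE G (P ∪ Q)).card = ∑ β ∈ Q, (G.neighborFinset β ∩ P).card := by
  have hset : inE G (P ∪ Q)
      = Q.biUnion (fun β => (G.neighborFinset β ∩ P).image (fun a => s(a, β))) := by
    ext e
    induction e with
    | _ x y =>
      simp only [mem_inE, Finset.mem_biUnion, Finset.mem_image, Finset.mem_inter,
        SimpleGraph.mem_neighborFinset]
      constructor
      · rintro ⟨hadj, hall⟩
        rw [SimpleGraph.mem_edgeFinset, SimpleGraph.mem_edgeSet] at hadj
        have hx := hall x (by simp)
        have hy := hall y (by simp)
        rw [Finset.mem_union] at hx hy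
        rcases hx with hxP | hxQ
        · rcases hy with hyP | hyQ
          · exact absurd hadj (hPind x hxP y hyP)
          · exact ⟨y, hyQ, x, ⟨hadj.symm, hxP⟩, rfl⟩
        · rcases hy with hyP | hyQ
          · exact ⟨x, hxQ, y, ⟨hadj, hyP⟩, Sym2.eq_swap⟩
          · exact absurd hadj (hQind x hxQ y hyQ)
      · rintro ⟨β, hβ, a, ⟨hadj, haP⟩, heq⟩
        constructor
        · rw [SimpleGraph.mem_edgeFinset, ← heq, SimpleGraph.mem_edgeSet]
          exact hadj.symm
        · intro v hv
          rw [← heq, Sym2.mem_iff] at hv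
          rcases hv with rfl | rfl
          · exact Finset.mem_union_left _ haP
          · exact Finset.mem_union_right _ hβ
  rw [hset, Finset.card_biUnion]
  · refine Finset.sum_congr rfl (fun β hβ => ?_)
    apply Finset.card_image_of_injOn
    intro a ha a' ha' heq
    rw [Sym2.eq_iff] at heq
    rcases heq with ⟨h1, _⟩ | ⟨h1, h2⟩
    · exact h1
    · exact h1.trans h2
  · intro β hβ β' hβ' hne
    rw [Function.onFun, Finset.disjoint_left]
    rintro e he he'
    rw [Finset.mem_image] at he he'
    obtain ⟨a, ha, rfl⟩ := he
    obtain ⟨a', ha', heq⟩ := he'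
    rw [Sym2.eq_iff] at heq
    rcases heq with ⟨h1, h2⟩ | ⟨h1, h2⟩
    · exact hne h2.symm
    · rw [Finset.mem_inter] at ha ha'
      have hβP : β ∈ P := by rw [← h1]; exact ha'.2
      exact absurd hβ (Finset.disjoint_left.mp hdisj hβP)

lemma card_inE_erase (U : Finset V) (v : V) (hv : v ∈ U) :
    (inE G U).card = (inE G (U.erase v)).card + (G.neighborFinset v ∩ U).card := by
  have himgsub : ∀ w, w ∈ G.neighborFinset v ∩ U → w ≠ v := by
    intro w hw
    rw [Finset.mem_inter, SimpleGraph.mem_neighborFinset] at hw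
    exact fun h => G.irrefl (h ▸ hw.1)
  have hsplit : inE G U
      = inE G (U.erase v) ∪ (G.neighborFinset v ∩ U).image (fun w => s(v, w)) := by
    ext e
    induction e with
    | _ x y =>
      simp only [mem_inE, Finset.mem_union, Finset.mem_image, Finset.mem_inter,
        SimpleGraph.mem_neighborFinset]
      constructor
      · rintro ⟨he, hall⟩
        by_cases hve : v ∈ (s(x,y) : Sym2 V)
        · right
          have hadj : G.Adj x y := by
            rwa [SimpleGraph.mem_edgeFinset, SimpleGraph.mem_edgeSet] at he
          rw [Sym2.mem_iff] at hve
          rcases hve with rfl | rfl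
          · exact ⟨y, ⟨hadj, hall y (by simp)⟩, rfl⟩
          · exact ⟨x, ⟨hadj.symm, hall x (by simp)⟩, Sym2.eq_swap⟩
        · left
          refine ⟨he, fun w hw => Finset.mem_erase.mpr ⟨?_, hall w hw⟩⟩
          rintro rfl; exact hve hw
      · rintro (⟨he, hall⟩ | ⟨w, ⟨hadj, hwU⟩, heq⟩)
        · exact ⟨he, fun u hu => Finset.erase_subset _ _ (hall u hu)⟩
        · refine ⟨?_, ?_⟩
          · rw [SimpleGraph.mem_edgeFinset, ← heq, SimpleGraph.mem_edgeSet]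
            exact hadj
          · intro u hu; rw [← heq, Sym2.mem_iff] at hu
            rcases hu with rfl | rfl
            · exact hv
            · exact hwU
  rw [hsplit, Finset.card_union_of_disjoint, Finset.card_image_of_injOn]
  · intro a ha a' ha' heq
    rw [Sym2.eq_iff] at heq
    rcases heq with ⟨_, h2⟩ | ⟨h1, h2⟩
    · exact h2
    · exact h2.trans h1
  · rw [Finset.disjoint_left]
    rintro e he he'
    rw [Finset.mem_image] at he'
    obtain ⟨w, hw, rfl⟩ := he'
    rw [mem_inE] at he
    have := he.2 v (by simp)
    exact (Finset.mem_erase.mp this).1 rfl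




noncomputable def dd (A' : Finset V) (β : V) : ℕ := (G.neighborFinset β ∩ A').card

lemma dd_mono {A' A'' : Finset V} (h : A' ⊆ A'') (β : V) : dd G A' β ≤ dd G A'' β :=
  Finset.card_le_card (Finset.inter_subset_inter_left h)

lemma dd_erase_ge (A' : Finset V) (a β : V) : dd G A' β ≤ dd G (A'.erase a) β + 1 := by
  have h : G.neighborFinset β ∩ A' ⊆ insert a (G.neighborFinset β ∩ A'.erase a) := by
    intro x hx
    rw [Finset.mem_inter] at hx
    by_cases hxa : x = a
    · exact Finset.mem_insert.mpr (Or.inl hxa)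
    · exact Finset.mem_insert.mpr (Or.inr (Finset.mem_inter.mpr
        ⟨hx.1, Finset.mem_erase.mpr ⟨hxa, hx.2⟩⟩))
  calc dd G A' β ≤ (insert a (G.neighborFinset β ∩ A'.erase a)).card := Finset.card_le_card h
    _ ≤ dd G (A'.erase a) β + 1 := Finset.card_insert_le _ _

lemma dd_compl {P A' : Finset V} (h : A' ⊆ P) (β : V) :
    dd G (P \ A') β + dd G A' β = dd G P β := by
  rw [dd, dd, dd, ← Finset.card_union_of_disjoint]
  · congr 1
    ext v
    simp only [Finset.mem_union, Finset.mem_inter, Finset.mem_sdiff]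
    constructor
    · rintro (⟨h1, h2, _⟩ | ⟨h1, h2⟩)
      · exact ⟨h1, h2⟩
      · exact ⟨h1, h h2⟩
    · rintro ⟨h1, h2⟩
      by_cases hA : v ∈ A'
      · exact Or.inr ⟨h1, hA⟩
      · exact Or.inl ⟨h1, h2, hA⟩
  · rw [Finset.disjoint_left]
    rintro v hv hv'
    rw [Finset.mem_inter, Finset.mem_sdiff] at hv
    rw [Finset.mem_inter] at hv'
    exact hv.2.2 hv'.2

section Sweep
variable (P Q : Finset V) (b : ℕ)

noncomputable def LoS (A' : Finset V) : Finset V :=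
  Q.filter (fun β => dd G P β + 2 ≤ 2 * dd G A' β)

noncomputable def HiS (A' : Finset V) : Finset V :=
  Q.filter (fun β => dd G P β ≤ 2 * dd G A' β + 1)

noncomputable def vS (A' T : Finset V) : ℤ :=
  (∑ β ∈ T, (dd G A' β : ℤ)) - (b : ℤ) * (A'.card + T.card)

noncomputable def wS (A' T : Finset V) : ℤ :=
  (∑ β ∈ Q \ T, ((dd G P β : ℤ) - (dd G A' β : ℤ)))
    - (b : ℤ) * (((P \ A').card : ℤ) + ((Q \ T).card : ℤ))

variable (hdisj : Disjoint P Q)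
    (hPind : ∀ x ∈ P, ∀ y ∈ P, ¬ G.Adj x y) (hQind : ∀ x ∈ Q, ∀ y ∈ Q, ¬ G.Adj x y)

include hdisj hPind hQind in
lemma bridge1 {A' T : Finset V} (hA : A' ⊆ P) (hT : T ⊆ Q) :
    ((inE G (A' ∪ T)).card : ℤ) = (∑ β ∈ T, (dd G A' β : ℤ)) := by
  rw [card_inE_union G A' T (hdisj.mono hA hT)
    (fun x hx y hy => hPind x (hA hx) y (hA hy))
    (fun x hx y hy => hQind x (hT hx) y (hT hy))]
  push_cast
  rfl

include hdisj hPind hQind in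
lemma bridge2 {A' T : Finset V} (hA : A' ⊆ P) (hT : T ⊆ Q) :
    ((inE G ((P \ A') ∪ (Q \ T))).card : ℤ)
      = ∑ β ∈ Q \ T, ((dd G P β : ℤ) - (dd G A' β : ℤ)) := by
  rw [card_inE_union G (P \ A') (Q \ T) (hdisj.mono (Finset.sdiff_subset) (Finset.sdiff_subset))
    (fun x hx y hy => hPind x (Finset.sdiff_subset hx) y (Finset.sdiff_subset hy))
    (fun x hx y hy => hQind x (Finset.sdiff_subset hx) y (Finset.sdiff_subset hy))]
  push_cast
  refine Finset.sum_congr rfl (fun β _ => ?_)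
  have := dd_compl G hA β
  have h2 : ((dd G (P \ A') β : ℤ) + (dd G A' β : ℤ)) = (dd G P β : ℤ) := by
    exact_mod_cast congrArg (Nat.cast : ℕ → ℤ) this
  rw [dd] at h2
  linarith [h2]


include hdisj hPind hQind in
lemma sweep (N : ℕ) (hQP : Q.card ≤ P.card)
    (hdeg : ∀ β ∈ Q, 2 * b ≤ dd G P β)
    (hm : 4 * N + (P.card + Q.card) * (2 * b + 1) ≤ (inE G (P ∪ Q)).card) :
    ∃ A' T', A' ⊆ P ∧ T' ⊆ Q ∧
      N + b * (A'.card + T'.card) ≤ (inE G (A' ∪ T')).card ∧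
      N + b * ((P \ A').card + (Q \ T').card) ≤ (inE G ((P \ A') ∪ (Q \ T'))).card := by
  classical
  have hdegP : ∀ β, dd G P β ≤ P.card := fun β => Finset.card_le_card Finset.inter_subset_right
  -- m in ℤ
  have hmZ : (4 * N : ℤ) + (P.card + Q.card) * (2 * b + 1) ≤ ∑ β ∈ Q, (dd G P β : ℤ) := by
    have hb := bridge1 G P Q hdisj hPind hQind (le_refl P) (le_refl Q)
    have hm' : ((4 * N + (P.card + Q.card) * (2 * b + 1) : ℕ) : ℤ) ≤ ((inE G (P ∪ Q)).card : ℤ) := by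
      exact_mod_cast hm
    push_cast at hm'
    linarith [hb, hm']
  -- converter from (vS, wS) bounds to the goal
  have convert : ∀ A' T', A' ⊆ P → T' ⊆ Q →
      (N : ℤ) ≤ vS G b A' T' → (N : ℤ) ≤ wS G P Q b A' T' →
      (N + b * (A'.card + T'.card) ≤ (inE G (A' ∪ T')).card ∧
       N + b * ((P \ A').card + (Q \ T').card) ≤ (inE G ((P \ A') ∪ (Q \ T'))).card) := by
    intro A' T' hA hT hv hw
    constructor
    · have hb := bridge1 G P Q hdisj hPind hQind hA hT
      rw [vS] at hv
      have : ((N + b * (A'.card + T'.card) : ℕ) : ℤ) ≤ ((inE G (A' ∪ T')).card : ℤ) := by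
        push_cast
        push_cast at hv
        linarith [hb, hv]
      exact_mod_cast this
    · have hb := bridge2 G P Q hdisj hPind hQind hA hT
      rw [wS] at hw
      have : ((N + b * ((P \ A').card + (Q \ T').card) : ℕ) : ℤ)
          ≤ ((inE G ((P \ A') ∪ (Q \ T'))).card : ℤ) := by
        push_cast
        push_cast at hw
        linarith [hb, hw]
      exact_mod_cast this
  -- search space
  set μ : Finset V × Finset V → ℕ := fun AT => (P.card + Q.card + 1) * AT.1.card + AT.2.card with hμ
  set SP : Finset (Finset V × Finset V) := (P.powerset ×ˢ Q.powerset).filter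
      (fun AT => LoS G P Q AT.1 ⊆ AT.2 ∧ AT.2 ⊆ HiS G P Q AT.1 ∧ (N : ℤ) ≤ vS G b AT.1 AT.2)
      with hSP
  have memSP : ∀ AT : Finset V × Finset V, AT ∈ SP ↔
      (AT.1 ⊆ P ∧ AT.2 ⊆ Q ∧ LoS G P Q AT.1 ⊆ AT.2 ∧ AT.2 ⊆ HiS G P Q AT.1 ∧
        (N : ℤ) ≤ vS G b AT.1 AT.2) := by
    intro AT
    rw [hSP, Finset.mem_filter, Finset.mem_product, Finset.mem_powerset, Finset.mem_powerset]
    tauto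
  have hSPne : SP.Nonempty := by
    refine ⟨(P, Q), (memSP (P, Q)).mpr ⟨le_refl P, le_refl Q, ?_, ?_, ?_⟩⟩
    · show LoS G P Q P ⊆ Q
      exact Finset.filter_subset _ _
    · show Q ⊆ HiS G P Q P
      intro β hβ
      rw [HiS, Finset.mem_filter]
      refine ⟨hβ, ?_⟩
      omega
    · show (N : ℤ) ≤ vS G b P Q
      rw [vS]
      have h0 : (0:ℤ) ≤ ((P.card : ℤ) + (Q.card : ℤ)) := by positivity
      have h1 : (0:ℤ) ≤ (b : ℤ) := by positivity
      have h2 : (0:ℤ) ≤ (N : ℤ) := by positivity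
      push_cast
      push_cast at hmZ
      nlinarith [mul_nonneg h0 h1]
  obtain ⟨AT, hATmem, hATmin⟩ := Finset.exists_min_image SP μ hSPne
  obtain ⟨hA₀P, hT₀Q, hLoT, hTHi, hvN⟩ := (memSP AT).mp hATmem
  set A₀ := AT.1 with hA₀
  set T₀ := AT.2 with hT₀
  -- minimality in usable form
  have hmin : ∀ A T, A ⊆ P → T ⊆ Q → LoS G P Q A ⊆ T → T ⊆ HiS G P Q A →
      μ (A, T) < μ (A₀, T₀) → vS G b A T ≤ (N : ℤ) - 1 := by
    intro A T hA hT h1 h2 hlt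
    by_contra hcon
    push_neg at hcon
    have : (N : ℤ) ≤ vS G b A T := by linarith
    have hmem : (A, T) ∈ SP := (memSP (A, T)).mpr ⟨hA, hT, h1, h2, this⟩
    have h2 := hATmin (A, T) hmem
    exact absurd hlt (not_lt.mpr h2)

  -- CASE SPLIT
  by_cases hcase : ∃ β₀ ∈ T₀, β₀ ∉ LoS G P Q A₀
  · -- CASE 1: remove a flexible element from T₀
    obtain ⟨β₀, hβ₀T, hβ₀Lo⟩ := hcase
    set T' := T₀.erase β₀ with hT'
    have hT'Q : T' ⊆ Q := (Finset.erase_subset _ _).trans hT₀Q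
    have hleg1 : LoS G P Q A₀ ⊆ T' := by
      intro x hx
      exact Finset.mem_erase.mpr ⟨fun h => hβ₀Lo (h ▸ hx), hLoT hx⟩
    have hleg2 : T' ⊆ HiS G P Q A₀ := (Finset.erase_subset _ _).trans hTHi
    have hcardT : T'.card + 1 = T₀.card := Finset.card_erase_add_one hβ₀T
    have hlt : μ (A₀, T') < μ (A₀, T₀) := by
      have hc : T'.card < T₀.card := by rw [← hcardT]; exact Nat.lt_succ_self _
      simp only [hμ]
      exact Nat.add_lt_add_left hc _
    have hvle : vS G b A₀ T' ≤ (N : ℤ) - 1 := hmin A₀ T' hA₀P hT'Q hleg1 hleg2 hlt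
    have hsplit : vS G b A₀ T₀ = vS G b A₀ T' + ((dd G A₀ β₀ : ℤ) - b) := by
      rw [vS, vS]
      have hsum : ∑ β ∈ T', (dd G A₀ β : ℤ) + (dd G A₀ β₀ : ℤ) = ∑ β ∈ T₀, (dd G A₀ β : ℤ) :=
        Finset.sum_erase_add _ _ hβ₀T
      have hc : ((T₀.card : ℤ)) = (T'.card : ℤ) + 1 := by exact_mod_cast hcardT.symm
      rw [← hsum, hc]; ring
    have hβ₀hi : dd G P β₀ ≤ 2 * dd G A₀ β₀ + 1 := (Finset.mem_filter.mp (hTHi hβ₀T)).2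
    have hddp : (2 * (dd G A₀ β₀ : ℤ)) ≤ (P.card : ℤ) + 1 := by
      have h1 := hdegP β₀
      have hnl : ¬ (dd G P β₀ + 2 ≤ 2 * dd G A₀ β₀) := by
        intro h
        exact hβ₀Lo (Finset.mem_filter.mpr ⟨hT₀Q hβ₀T, h⟩)
      have : 2 * dd G A₀ β₀ ≤ P.card + 1 := by omega
      exact_mod_cast this
    -- FACT1
    have hpt1 : ∀ β ∈ T₀, (dd G P β : ℤ) - 1 ≤ 2 * (dd G A₀ β : ℤ) := by
      intro β hβ
      have h := (Finset.mem_filter.mp (hTHi hβ)).2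
      have h' : (dd G P β : ℤ) ≤ 2 * (dd G A₀ β : ℤ) + 1 := by exact_mod_cast h
      linarith
    have hpt2 : ∀ β ∈ Q \ T₀, (dd G P β : ℤ) - 1 ≤ 2 * ((dd G P β : ℤ) - (dd G A₀ β : ℤ)) := by
      intro β hβ
      rw [Finset.mem_sdiff] at hβ
      have hβLo : β ∉ LoS G P Q A₀ := fun h => hβ.2 (hLoT h)
      have h1 : ¬ (dd G P β + 2 ≤ 2 * dd G A₀ β) := by
        intro h; exact hβLo (Finset.mem_filter.mpr ⟨hβ.1, h⟩)
      have h2 : 2 * dd G A₀ β ≤ dd G P β + 1 := by omega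
      have h2' : 2 * (dd G A₀ β : ℤ) ≤ (dd G P β : ℤ) + 1 := by exact_mod_cast h2
      linarith
    have hs1 : ∑ β ∈ T₀, ((dd G P β : ℤ) - 1) ≤ 2 * ∑ β ∈ T₀, (dd G A₀ β : ℤ) := by
      rw [Finset.mul_sum]
      exact Finset.sum_le_sum hpt1
    have hs2 : ∑ β ∈ Q \ T₀, ((dd G P β : ℤ) - 1)
        ≤ 2 * ∑ β ∈ Q \ T₀, ((dd G P β : ℤ) - (dd G A₀ β : ℤ)) := by
      rw [Finset.mul_sum]
      exact Finset.sum_le_sum hpt2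
    have e1 : ∑ β ∈ T₀, ((dd G P β : ℤ) - 1) = (∑ β ∈ T₀, (dd G P β : ℤ)) - T₀.card := by
      rw [Finset.sum_sub_distrib, Finset.sum_const]; push_cast; ring
    have e2 : ∑ β ∈ Q \ T₀, ((dd G P β : ℤ) - 1)
        = (∑ β ∈ Q \ T₀, (dd G P β : ℤ)) - ((Q \ T₀).card : ℤ) := by
      rw [Finset.sum_sub_distrib, Finset.sum_const]; push_cast; ring
    have e3 : (∑ β ∈ Q \ T₀, (dd G P β : ℤ)) + ∑ β ∈ T₀, (dd G P β : ℤ)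
        = ∑ β ∈ Q, (dd G P β : ℤ) := Finset.sum_sdiff hT₀Q
    have c1 : ((P \ A₀).card : ℤ) + (A₀.card : ℤ) = (P.card : ℤ) := by
      exact_mod_cast Finset.card_sdiff_add_card_eq_card hA₀P
    have c2 : ((Q \ T₀).card : ℤ) + (T₀.card : ℤ) = (Q.card : ℤ) := by
      exact_mod_cast Finset.card_sdiff_add_card_eq_card hT₀Q
    have hb0 : (0:ℤ) ≤ (b : ℤ) := by positivity
    have mc1 : (b:ℤ) * (((P \ A₀).card : ℤ)) + (b:ℤ)*((A₀.card:ℤ)) = (b:ℤ)*((P.card:ℤ)) := by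
      linear_combination (b:ℤ) * c1
    have mc2 : (b:ℤ) * (((Q \ T₀).card : ℤ)) + (b:ℤ)*((T₀.card:ℤ)) = (b:ℤ)*((Q.card:ℤ)) := by
      linear_combination (b:ℤ) * c2
    have hwN : (N : ℤ) ≤ wS G P Q b A₀ T₀ := by
      rw [wS]
      have hvu : (∑ β ∈ T₀, (dd G A₀ β : ℤ)) - (b:ℤ) * (((A₀.card :ℕ): ℤ) + ((T₀.card:ℕ):ℤ))
          ≤ (N : ℤ) - 1 + ((dd G A₀ β₀ : ℤ) - b) := by
        have h1 := hsplit
        have h2 := hvle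
        simp only [vS] at h1 h2
        linarith [h1, h2]
      push_cast
      push_cast at hvu hmZ e1 e2 e3 c1 c2 hs1 hs2 hddp
      linarith [hvu, hmZ, e1, e2, e3, c1, c2, hs1, hs2, hddp, hb0, mc1, mc2]
    obtain ⟨g1, g2⟩ := convert A₀ T₀ hA₀P hT₀Q hvN hwN
    exact ⟨A₀, T₀, hA₀P, hT₀Q, g1, g2⟩
  · -- CASE 2: T₀ = Lo A₀
    push_neg at hcase
    have hTLo : T₀ = LoS G P Q A₀ := Finset.Subset.antisymm (fun β hβ => hcase β hβ) hLoT
    by_cases hA0 : A₀ = ∅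
    · -- trivial subcase: N = 0
      have hLoEmpty : LoS G P Q A₀ = ∅ := by
        rw [hA0, LoS]
        apply Finset.filter_false_of_mem
        intro β hβ
        have : dd G (∅ : Finset V) β = 0 := by
          rw [dd, Finset.inter_empty, Finset.card_empty]
        omega
      have hT0e : T₀ = ∅ := by rw [hTLo, hLoEmpty]
      have hN0 : N = 0 := by
        have hv0 : vS G b A₀ T₀ = 0 := by
          rw [vS, hT0e, hA0]; simp
        rw [hv0] at hvN
        exact_mod_cast le_antisymm (by exact_mod_cast hvN) (Nat.zero_le N)
      refine ⟨∅, ∅, Finset.empty_subset _, Finset.empty_subset _, ?_, ?_⟩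
      · simp [hN0]
      · rw [Finset.sdiff_empty, Finset.sdiff_empty]
        have h1 : b * (P.card + Q.card) ≤ (P.card + Q.card) * (2*b+1) := by
          rw [mul_comm]
          exact Nat.mul_le_mul_left _ (by omega)
        omega
    · -- main subcase: danger resolution
      obtain ⟨a, ha⟩ := Finset.nonempty_iff_ne_empty.mpr hA0
      set A'' := A₀.erase a with hA''def
      have hA''P : A'' ⊆ P := (Finset.erase_subset _ _).trans hA₀P
      have hcardA : A''.card + 1 = A₀.card := Finset.card_erase_add_one ha
      have hHi''Q : HiS G P Q A'' ⊆ Q := Finset.filter_subset _ _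
      have hLoHi'' : LoS G P Q A'' ⊆ HiS G P Q A'' := by
        intro β hβ
        rw [LoS, Finset.mem_filter] at hβ
        rw [HiS, Finset.mem_filter]
        exact ⟨hβ.1, by omega⟩
      have hlt : μ (A'', HiS G P Q A'') < μ (A₀, T₀) := by
        simp only [hμ]
        have h1 : (HiS G P Q A'').card ≤ Q.card := Finset.card_le_card hHi''Q
        have h2 : (P.card + Q.card + 1) * (A''.card + 1)
            = (P.card + Q.card + 1) * A''.card + (P.card + Q.card + 1) := by ring
        rw [← hcardA, h2]
        omega
      have hvile : vS G b A'' (HiS G P Q A'') ≤ (N:ℤ) - 1 :=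
        hmin A'' _ hA''P hHi''Q hLoHi'' (le_refl _) hlt
      have hS1 : ∀ β ∈ LoS G P Q A₀, (dd G P β : ℤ) ≤ 2 * (dd G A'' β : ℤ) := by
        intro β hβ
        rw [LoS, Finset.mem_filter] at hβ
        have h1 := hβ.2
        have h2 := dd_erase_ge G A₀ a β
        rw [← hA''def] at h2
        have : dd G P β ≤ 2 * dd G A'' β := by omega
        exact_mod_cast this
      have hS2 : LoS G P Q A₀ ⊆ HiS G P Q A'' := by
        intro β hβ
        have h := hS1 β hβ
        have hQβ : β ∈ Q := (Finset.filter_subset _ _) hβ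
        rw [HiS, Finset.mem_filter]
        refine ⟨hQβ, ?_⟩
        have h' : dd G P β ≤ 2 * dd G A'' β := by exact_mod_cast h
        omega
      have hS3 : ∑ β ∈ LoS G P Q A₀, ((dd G A'' β : ℤ) - b)
          ≤ ∑ β ∈ HiS G P Q A'', ((dd G A'' β : ℤ) - b) := by
        apply Finset.sum_le_sum_of_subset_of_nonneg hS2
        intro β hβ _
        rw [HiS, Finset.mem_filter] at hβ
        have h1 := hβ.2
        have h2 := hdeg β hβ.1
        have h3 : b ≤ dd G A'' β := by omega
        have h4 : (b:ℤ) ≤ (dd G A'' β : ℤ) := by exact_mod_cast h3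
        linarith
      have hS4 : ∑ β ∈ HiS G P Q A'', ((dd G A'' β : ℤ) - b)
          ≤ (N : ℤ) - 1 + (b:ℤ) * ((A₀.card : ℤ) - 1) := by
        have hunf : ∑ β ∈ HiS G P Q A'', ((dd G A'' β : ℤ) - b)
            = vS G b A'' (HiS G P Q A'') + (b:ℤ) * (A''.card : ℤ) := by
          rw [vS, Finset.sum_sub_distrib, Finset.sum_const]
          push_cast
          ring
        have hc : ((A''.card : ℤ)) = (A₀.card : ℤ) - 1 := by
          have h := hcardA
          have h' : ((A''.card : ℤ)) + 1 = (A₀.card : ℤ) := by exact_mod_cast h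
          linarith
        rw [hunf, hc]
        linarith [hvile]
      have hS5 : ∑ β ∈ LoS G P Q A₀, (dd G P β : ℤ)
          ≤ 2*(N:ℤ) - 2 + 2*(b:ℤ)*((A₀.card:ℤ) - 1)
            + 2*(b:ℤ)*(((LoS G P Q A₀).card : ℤ)) := by
        have h1 : ∑ β ∈ LoS G P Q A₀, (dd G P β : ℤ)
            ≤ 2 * ∑ β ∈ LoS G P Q A₀, (dd G A'' β : ℤ) := by
          rw [Finset.mul_sum]
          refine Finset.sum_le_sum (fun β hβ => ?_)
          exact hS1 β hβ
        have h2 : ∑ β ∈ LoS G P Q A₀, (dd G A'' β : ℤ)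
            = (∑ β ∈ LoS G P Q A₀, ((dd G A'' β:ℤ) - b))
              + (b:ℤ)*(((LoS G P Q A₀).card : ℤ)) := by
          rw [Finset.sum_sub_distrib, Finset.sum_const]
          push_cast
          ring
        linarith [hS3, hS4]
      have hLoQ : LoS G P Q A₀ ⊆ Q := Finset.filter_subset _ _
      have hpt2 : ∀ β ∈ Q \ LoS G P Q A₀,
          (dd G P β : ℤ) - 1 ≤ 2 * ((dd G P β : ℤ) - (dd G A₀ β : ℤ)) := by
        intro β hβ
        rw [Finset.mem_sdiff] at hβ
        have h1 : ¬ (dd G P β + 2 ≤ 2 * dd G A₀ β) := by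
          intro h; exact hβ.2 (Finset.mem_filter.mpr ⟨hβ.1, h⟩)
        have h2 : 2 * dd G A₀ β ≤ dd G P β + 1 := by omega
        have h2' : 2 * (dd G A₀ β : ℤ) ≤ (dd G P β : ℤ) + 1 := by exact_mod_cast h2
        linarith
      have hs2 : ∑ β ∈ Q \ LoS G P Q A₀, ((dd G P β : ℤ) - 1)
          ≤ 2 * ∑ β ∈ Q \ LoS G P Q A₀, ((dd G P β : ℤ) - (dd G A₀ β : ℤ)) := by
        rw [Finset.mul_sum]
        exact Finset.sum_le_sum hpt2
      have e2 : ∑ β ∈ Q \ LoS G P Q A₀, ((dd G P β : ℤ) - 1)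
          = (∑ β ∈ Q \ LoS G P Q A₀, (dd G P β : ℤ)) - ((Q \ LoS G P Q A₀).card : ℤ) := by
        rw [Finset.sum_sub_distrib, Finset.sum_const]; push_cast; ring
      have e3 : (∑ β ∈ Q \ LoS G P Q A₀, (dd G P β : ℤ)) + ∑ β ∈ LoS G P Q A₀, (dd G P β : ℤ)
          = ∑ β ∈ Q, (dd G P β : ℤ) := Finset.sum_sdiff hLoQ
      have c1 : ((P \ A₀).card : ℤ) + (A₀.card : ℤ) = (P.card : ℤ) := by
        exact_mod_cast Finset.card_sdiff_add_card_eq_card hA₀P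
      have c2 : ((Q \ LoS G P Q A₀).card : ℤ) + ((LoS G P Q A₀).card : ℤ) = (Q.card : ℤ) := by
        exact_mod_cast Finset.card_sdiff_add_card_eq_card hLoQ
      have hb0 : (0:ℤ) ≤ (b : ℤ) := by positivity
      have hp0 : (0:ℤ) ≤ (P.card : ℤ) := by positivity
      have hL0 : (0:ℤ) ≤ ((LoS G P Q A₀).card : ℤ) := by positivity
      have mc1 : (b:ℤ) * (((P \ A₀).card : ℤ)) + (b:ℤ)*((A₀.card:ℤ)) = (b:ℤ)*((P.card:ℤ)) := by
        linear_combination (b:ℤ) * c1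
      have mc2 : (b:ℤ) * (((Q \ LoS G P Q A₀).card : ℤ)) + (b:ℤ)*(((LoS G P Q A₀).card:ℤ))
          = (b:ℤ)*((Q.card:ℤ)) := by
        linear_combination (b:ℤ) * c2
      have hwN : (N : ℤ) ≤ wS G P Q b A₀ T₀ := by
        rw [hTLo, wS]
        push_cast
        push_cast at hs2 e2 e3 c1 c2 hS5 hmZ
        linarith [hs2, e2, e3, c1, c2, hS5, hmZ, hb0, hp0, hL0, mc1, mc2]
      obtain ⟨g1, g2⟩ := convert A₀ T₀ hA₀P hT₀Q hvN hwN
      exact ⟨A₀, T₀, hA₀P, hT₀Q, g1, g2⟩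

end Sweep


/-- The bipartite partition lemma on an arbitrary vertex subset. -/
lemma partition (C : G.Coloring (Fin 2)) (b N : ℕ) (U : Finset V)
    (hdeg : ∀ v ∈ U, 2 * b ≤ (G.neighborFinset v ∩ U).card)
    (hm : 4 * N + U.card * (2 * b + 1) ≤ (inE G U).card) :
    ∃ S ⊆ U, (N + b * S.card ≤ (inE G S).card) ∧
      (N + b * (U \ S).card ≤ (inE G (U \ S)).card) := by
  classical
  -- a symmetric helper handling both orientations
  have key : ∀ P Q : Finset V, Disjoint P Q → P ∪ Q = U →
      (∀ x ∈ P, ∀ y ∈ P, ¬ G.Adj x y) → (∀ x ∈ Q, ∀ y ∈ Q, ¬ G.Adj x y) →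
      Q.card ≤ P.card →
      ∃ S ⊆ U, (N + b * S.card ≤ (inE G S).card) ∧
        (N + b * (U \ S).card ≤ (inE G (U \ S)).card) := by
    intro P Q hdisj hunion hPind hQind hQP
    have hdeg' : ∀ β ∈ Q, 2 * b ≤ (G.neighborFinset β ∩ P).card := by
      intro β hβ
      have hsub : G.neighborFinset β ∩ U ⊆ G.neighborFinset β ∩ P := by
        intro x hx
        rw [Finset.mem_inter] at hx
        rw [Finset.mem_inter]
        refine ⟨hx.1, ?_⟩
        have hxU : x ∈ P ∪ Q := by rw [hunion]; exact hx.2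
        rw [Finset.mem_union] at hxU
        rcases hxU with h | h
        · exact h
        · exfalso
          have hadj : G.Adj β x := by
            have := hx.1
            rwa [SimpleGraph.mem_neighborFinset] at this
          exact hQind β hβ x h hadj
      have h1 := hdeg β (by rw [← hunion]; exact Finset.mem_union_right _ hβ)
      exact le_trans h1 (Finset.card_le_card hsub)
    have hcard : P.card + Q.card = U.card := by
      rw [← hunion, Finset.card_union_of_disjoint hdisj]
    have hm' : 4 * N + (P.card + Q.card) * (2 * b + 1) ≤ (inE G (P ∪ Q)).card := by
      rw [hcard, hunion]; exact hm
    obtain ⟨A', T', hA, hT, h1, h2⟩ :=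
      sweep G P Q b hdisj hPind hQind N hQP hdeg' hm'
    refine ⟨A' ∪ T', ?_, ?_, ?_⟩
    · rw [← hunion]; exact Finset.union_subset_union hA hT
    · have hc : (A' ∪ T').card = A'.card + T'.card :=
        Finset.card_union_of_disjoint (hdisj.mono hA hT)
      rw [hc]; exact h1
    · have hcompl : U \ (A' ∪ T') = (P \ A') ∪ (Q \ T') := by
        rw [← hunion]
        ext x
        simp only [Finset.mem_sdiff, Finset.mem_union, Finset.mem_sdiff]
        constructor
        · rintro ⟨hPQ | hPQ, hnot⟩
          · exact Or.inl ⟨hPQ, fun h => hnot (Or.inl h)⟩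
          · exact Or.inr ⟨hPQ, fun h => hnot (Or.inr h)⟩
        · rintro (⟨hx, hnx⟩ | ⟨hx, hnx⟩)
          · refine ⟨Or.inl hx, ?_⟩
            rintro (h | h)
            · exact hnx h
            · exact Finset.disjoint_left.mp hdisj hx (hT h)
          · refine ⟨Or.inr hx, ?_⟩
            rintro (h | h)
            · exact Finset.disjoint_left.mp hdisj (hA h) hx
            · exact hnx h
      have hc2 : ((P \ A') ∪ (Q \ T')).card = (P \ A').card + (Q \ T').card :=
        Finset.card_union_of_disjoint (hdisj.mono Finset.sdiff_subset Finset.sdiff_subset)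
      rw [hcompl, hc2]
      exact h2
  set P₀ := U.filter (fun v => C v = 0) with hP₀
  set Q₀ := U.filter (fun v => C v ≠ 0) with hQ₀
  have hdisj : Disjoint P₀ Q₀ := by
    rw [Finset.disjoint_left]
    intro x hx hx'
    rw [hP₀, Finset.mem_filter] at hx
    rw [hQ₀, Finset.mem_filter] at hx'
    exact hx'.2 hx.2
  have hunion : P₀ ∪ Q₀ = U := by
    ext x
    simp only [hP₀, hQ₀, Finset.mem_union, Finset.mem_filter]
    by_cases h : C x = 0 <;> tauto
  have hPind : ∀ x ∈ P₀, ∀ y ∈ P₀, ¬ G.Adj x y := by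
    intro x hx y hy hadj
    rw [hP₀, Finset.mem_filter] at hx hy
    exact C.valid hadj (hx.2.trans hy.2.symm)
  have hQind : ∀ x ∈ Q₀, ∀ y ∈ Q₀, ¬ G.Adj x y := by
    intro x hx y hy hadj
    rw [hQ₀, Finset.mem_filter] at hx hy
    have hx1 : C x = 1 := by omega
    have hy1 : C y = 1 := by omega
    exact C.valid hadj (hx1.trans hy1.symm)
  rcases le_total Q₀.card P₀.card with h | h
  · exact key P₀ Q₀ hdisj hunion hPind hQind h
  · exact key Q₀ P₀ hdisj.symm (by rw [Finset.union_comm]; exact hunion) hQind hPind h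




noncomputable def mono (U : Finset V) {c : ℕ} (φ : V → Fin c) (j : Fin c) : Finset (Sym2 V) :=
  G.edgeFinset.filter (fun e => ∀ v ∈ e, v ∈ U ∧ φ v = j)

lemma main (C : G.Coloring (Fin 2)) (k : ℕ) : ∀ i : ℕ, ∀ U : Finset V,
    4 ^ i * k + U.card * (2 ^ i - 1) ≤ (inE G U).card →
    ∃ φ : V → Fin (2 ^ i), ∀ j : Fin (2 ^ i), k ≤ (mono G U φ j).card := by
  intro i
  induction i with
  | zero =>
    intro U hm
    refine ⟨fun _ => ⟨0, by norm_num⟩, fun j => ?_⟩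
    have hj : j = ⟨0, by norm_num⟩ := by
      apply Fin.ext
      have := j.2
      omega
    have hfil : mono G U (fun _ => (⟨0, by norm_num⟩ : Fin (2^0))) j = inE G U := by
      rw [mono, inE]
      apply Finset.filter_congr
      intro e he
      constructor
      · intro h v hv; exact (h v hv).1
      · intro h v hv; exact ⟨h v hv, by rw [hj]⟩
    rw [hfil]
    have h1 : 4 ^ 0 * k = k := by norm_num
    omega
  | succ i ih =>
    -- inner strong induction on the cardinality
    suffices H : ∀ n : ℕ, ∀ U : Finset V, U.card ≤ n →
        4 ^ (i+1) * k + U.card * (2 ^ (i+1) - 1) ≤ (inE G U).card →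
        ∃ φ : V → Fin (2 ^ (i+1)), ∀ j : Fin (2 ^ (i+1)), k ≤ (mono G U φ j).card by
      intro U hm
      exact H U.card U (le_refl _) hm
    intro n
    induction n with
    | zero =>
      intro U hcard hm
      have hU : U = ∅ := Finset.card_eq_zero.mp (Nat.le_zero.mp hcard)
      have hk : k = 0 := by
        subst hU
        simp only [Finset.card_empty, Nat.zero_mul, Nat.add_zero] at hm
        have hpos : 0 < 4 ^ (i+1) := Nat.pow_pos (by norm_num)
        have hle : (inE G (∅ : Finset V)).card = 0 := by
          rw [inE, Finset.card_eq_zero]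
          rw [Finset.filter_eq_empty_iff]
          intro e he
          intro hall
          induction e with
          | _ x y => exact absurd (hall x (by simp)) (by simp)
        rw [hle] at hm
        nlinarith
      refine ⟨fun _ => ⟨0, Nat.pow_pos (by norm_num)⟩, fun j => ?_⟩
      rw [hk]
      exact Nat.zero_le _
    | succ n ihn =>
      intro U hcard hm
      set b := 2 ^ i - 1 with hb
      have h2i : 1 ≤ 2 ^ i := Nat.one_le_two_pow
      by_cases hdeg : ∀ v ∈ U, 2 * b ≤ (G.neighborFinset v ∩ U).card
      · -- split via the partition lemma
        have hmm : 4 * (4 ^ i * k) + U.card * (2 * b + 1) ≤ (inE G U).card := by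
          have e1 : 4 * (4 ^ i * k) = 4 ^ (i+1) * k := by ring_nf
          have e2 : 2 * b + 1 = 2 ^ (i+1) - 1 := by
            rw [hb, pow_succ]
            omega
          rw [e1, e2]
          exact hm
        obtain ⟨S, hSU, h1, h2⟩ := partition G C b (4 ^ i * k) U hdeg hmm
        have hhyp1 : 4 ^ i * k + S.card * (2 ^ i - 1) ≤ (inE G S).card := by
          have : S.card * (2 ^ i - 1) = b * S.card := by rw [hb, mul_comm]
          omega
        have hhyp2 : 4 ^ i * k + (U \ S).card * (2 ^ i - 1) ≤ (inE G (U \ S)).card := by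
          have : (U \ S).card * (2 ^ i - 1) = b * (U \ S).card := by rw [hb, mul_comm]
          omega
        obtain ⟨φ₁, hφ₁⟩ := ih S hhyp1
        obtain ⟨φ₂, hφ₂⟩ := ih (U \ S) hhyp2
        have hpow : 2 ^ (i+1) = 2 ^ i + 2 ^ i := by rw [pow_succ]; ring
        set φ : V → Fin (2 ^ (i+1)) := fun v =>
          if v ∈ S then (⟨(φ₁ v).val, by have := (φ₁ v).2; omega⟩ : Fin (2 ^ (i+1)))
          else (⟨2 ^ i + (φ₂ v).val, by have := (φ₂ v).2; omega⟩ : Fin (2 ^ (i+1))) with hφ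
        refine ⟨φ, fun j => ?_⟩
        by_cases hj : j.val < 2 ^ i
        · set j₁ : Fin (2 ^ i) := ⟨j.val, hj⟩ with hj₁
          have hfil : mono G U φ j = mono G S φ₁ j₁ := by
            rw [mono, mono]
            apply Finset.filter_congr
            intro e he
            constructor
            · intro h v hv
              obtain ⟨hvU, hvj⟩ := h v hv
              by_cases hvS : v ∈ S
              · refine ⟨hvS, ?_⟩
                apply Fin.ext
                have : (φ v).val = j.val := by rw [hvj]
                rw [hφ] at this
                simp only [if_pos hvS] at this
                exact this
              · exfalso
                have : (φ v).val = j.val := by rw [hvj]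
                rw [hφ] at this
                simp only [if_neg hvS] at this
                omega
            · intro h v hv
              obtain ⟨hvS, hvj⟩ := h v hv
              refine ⟨hSU hvS, ?_⟩
              apply Fin.ext
              rw [hφ]
              simp only [if_pos hvS]
              show (φ₁ v).val = j.val
              rw [hvj]
          rw [hfil]
          exact hφ₁ j₁
        · have hj2 : 2 ^ i ≤ j.val := by omega
          have hjlt : j.val - 2 ^ i < 2 ^ i := by
            have := j.2
            omega
          set j₂ : Fin (2 ^ i) := ⟨j.val - 2 ^ i, hjlt⟩ with hj₂
          have hfil : mono G U φ j = mono G (U \ S) φ₂ j₂ := by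
            rw [mono, mono]
            apply Finset.filter_congr
            intro e he
            constructor
            · intro h v hv
              obtain ⟨hvU, hvj⟩ := h v hv
              by_cases hvS : v ∈ S
              · exfalso
                have : (φ v).val = j.val := by rw [hvj]
                rw [hφ] at this
                simp only [if_pos hvS] at this
                have := (φ₁ v).2
                omega
              · refine ⟨Finset.mem_sdiff.mpr ⟨hvU, hvS⟩, ?_⟩
                apply Fin.ext
                have : (φ v).val = j.val := by rw [hvj]
                rw [hφ] at this
                simp only [if_neg hvS] at this
                show (φ₂ v).val = j.val - 2 ^ i
                omega
            · intro h v hv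
              obtain ⟨hvUS, hvj⟩ := h v hv
              rw [Finset.mem_sdiff] at hvUS
              refine ⟨hvUS.1, ?_⟩
              apply Fin.ext
              rw [hφ]
              simp only [if_neg hvUS.2]
              show 2 ^ i + (φ₂ v).val = j.val
              have : (φ₂ v).val = j.val - 2 ^ i := by rw [hvj]
              omega
          rw [hfil]
          exact hφ₂ j₂
      · -- delete a low-degree vertex
        push_neg at hdeg
        obtain ⟨v, hvU, hvdeg⟩ := hdeg
        have hUpos : 1 ≤ U.card := Finset.card_pos.mpr ⟨v, hvU⟩
        have hcard' : (U.erase v).card ≤ n := by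
          rw [Finset.card_erase_of_mem hvU]
          omega
        have herase := card_inE_erase G U v hvU
        have hm' : 4 ^ (i+1) * k + (U.erase v).card * (2 ^ (i+1) - 1)
            ≤ (inE G (U.erase v)).card := by
          rw [Finset.card_erase_of_mem hvU]
          have hsub : U.card = (U.card - 1) + 1 := by omega
          have hexp : U.card * (2 ^ (i+1) - 1)
              = (U.card - 1) * (2 ^ (i+1) - 1) + (2 ^ (i+1) - 1) := by
            calc U.card * (2 ^ (i+1) - 1) = ((U.card - 1) + 1) * (2 ^ (i+1) - 1) := by rw [← hsub]
              _ = (U.card - 1) * (2 ^ (i+1) - 1) + (2 ^ (i+1) - 1) := by ring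
          have hdeg2 : (G.neighborFinset v ∩ U).card + 2 ≤ 2 ^ (i+1) - 1 := by
            rw [pow_succ]
            omega
          omega
        obtain ⟨φ, hφ⟩ := ihn (U.erase v) hcard' hm'
        refine ⟨φ, fun j => ?_⟩
        have hsub : mono G (U.erase v) φ j ⊆ mono G U φ j := by
          rw [mono, mono]
          intro e he
          rw [Finset.mem_filter] at he ⊢
          exact ⟨he.1, fun v' hv' => ⟨Finset.erase_subset _ _ (he.2 v' hv').1, (he.2 v' hv').2⟩⟩
        exact le_trans (hφ j) (Finset.card_le_card hsub)



end LCPwork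

open scoped Classical in
theorem stmt_11 {V : Type*} [Fintype V] (G : SimpleGraph V) (i k : ℕ)
    (hbip : G.Colorable 2)
    (hm : 4 ^ i * k + Fintype.card V * (2 ^ i - 1) ≤ G.edgeFinset.card) :
    LCP G (2 ^ i) k := by
  classical
  obtain ⟨C⟩ := hbip
  have huniv : LCPwork.inE G (univ : Finset V) = G.edgeFinset := by
    rw [LCPwork.inE]
    apply Finset.filter_true_of_mem
    intro e he
    intro v hv
    exact Finset.mem_univ v
  have hm' : 4 ^ i * k + (univ : Finset V).card * (2 ^ i - 1)
      ≤ (LCPwork.inE G (univ : Finset V)).card := by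
    rw [huniv, Finset.card_univ]
    exact hm
  obtain ⟨φ, hφ⟩ := LCPwork.main G C k i univ hm'
  refine ⟨φ, fun j => ?_⟩
  have hfil : LCPwork.mono G univ φ j = G.edgeFinset.filter (fun e => ∀ v ∈ e, φ v = j) := by
    rw [LCPwork.mono]
    apply Finset.filter_congr
    intro e he
    constructor
    · intro h v hv
      exact (h v hv).2
    · intro h v hv
      exact ⟨Finset.mem_univ v, h v hv⟩
  rw [← hfil]
  exact hφ j
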